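/- The proof system SKHM is strongly complete with respect to the class of all models: every SKHM-consistent set of L_Khm formulas is satisfiable at some state of some model. In particular, every valid L_Khm formula is derivable in SKHM. -/

import Mathlib

/-- Formulas of the language L_Khm over a countable set of proposition
letters (represented by `ℕ`): `φ ::= p | ¬φ | (φ∧φ) | Khm(φ,φ,φ)`. -/
inductive Formula : Type
  | atom : ℕ → Formula
  | neg : Formula → Formula
  | and : Formula → Formula → Formula
  | khm : Formula → Formula → Formula → Formula
deriving DecidableEq

namespace Formula

/-- The falsum `⊥`, as a standard abbreviation. -/
def falsum : Formula := and (atom 0) (neg (atom 0))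

/-- The verum `⊤`. -/
def top : Formula := neg falsum

/-- Material implication, as a standard abbreviation. -/
def imp (φ ψ : Formula) : Formula := neg (and φ (neg ψ))

/-- Biimplication. -/
def biimp (φ ψ : Formula) : Formula := and (imp φ ψ) (imp ψ φ)

/-- The universal modality `Uφ := Khm(¬φ, ⊤, ⊥)`. -/
def U (φ : Formula) : Formula := khm (neg φ) top falsum

/-- Uniform substitution of formulas for proposition letters. -/
def subst (f : ℕ → Formula) : Formula → Formula
  | atom n => f n
  | neg φ => neg (subst f φ)
  | and φ ψ => and (subst f φ) (subst f ψ)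
  | khm φ χ ψ => khm (subst f φ) (subst f χ) (subst f ψ)

end Formula

/-- A model (ability map): a labelled transition system over action symbols `Act`,
with a set of states `S`, transitions `R`, and valuation `V`. -/
structure Model (Act : Type) where
  S : Type
  R : Act → S → S → Prop
  V : S → Set ℕ

namespace Model

variable {Act : Type} (M : Model Act)

/-- `M.bigStep σ s t` : `s →σ t`, i.e. `t` is reachable from `s` by executing the
sequence of actions `σ`. -/
def bigStep : List Act → M.S → M.S → Prop
  | [], s, t => s = t
  | a :: σ, s, t => ∃ u, M.R a s u ∧ bigStep σ u t

/-- `σ = a₁⋯aₙ` is strongly executable at `s` if for each `0 ≤ k < n`,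
`s →σ_k t` implies `t` has at least one `a_{k+1}`-successor. -/
def stronglyExec (σ : List Act) (s : M.S) : Prop :=
  ∀ k (h : k < σ.length) (t : M.S),
    M.bigStep (σ.take k) s t → ∃ u, M.R (σ.get ⟨k, h⟩) t u

/-- Satisfaction. `M.sat (Formula.khm ψ χ φ) s` holds iff there is `σ ∈ Act*`
such that for every `s'` with `M, s' ⊨ ψ`: `σ` is strongly `χ`-executable at `s'`
(strongly executable, and all strictly intermediate states satisfy `χ`) and
`M, t ⊨ φ` for all `t` with `s' →σ t`. -/
def sat : Formula → M.S → Prop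
  | .atom n, s => n ∈ M.V s
  | .neg φ, s => ¬ sat φ s
  | .and φ ψ, s => sat φ s ∧ sat ψ s
  | .khm ψ χ φ, s => ∃ σ : List Act, ∀ s', sat ψ s' →
      (M.stronglyExec σ s' ∧
        ∀ k, 0 < k → k < σ.length → ∀ t, M.bigStep (σ.take k) s' t → sat χ t) ∧
      (∀ t, M.bigStep σ s' t → sat φ t)

end Model

/-- A formula is valid (w.r.t. the class of all models over action symbols `Act`)
if it is satisfied at every state of every model. -/
def Valid (Act : Type) (φ : Formula) : Prop :=
  ∀ M : Model Act, Nonempty M.S → ∀ s : M.S, M.sat φ s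

/-- Boolean evaluation treating proposition letters and `Khm`-formulas as atoms. -/
def evalB (v : Formula → Bool) : Formula → Bool
  | .atom n => v (.atom n)
  | .neg φ => ! evalB v φ
  | .and φ ψ => evalB v φ && evalB v ψ
  | .khm ψ χ φ => v (.khm ψ χ φ)

/-- Propositional tautologies. -/
def Tautology (φ : Formula) : Prop := ∀ v, evalB v φ = true

open Formula in
/-- Derivability in the proof system SKHM. -/
inductive Deriv : Formula → Prop
  | taut {φ} : Tautology φ → Deriv φ
  | distU (p q) : Deriv (((U p).and (U (p.imp q))).imp (U q))
  | tU (p) : Deriv ((U p).imp p)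
  | fourKhmU (p o q) : Deriv ((khm p o q).imp (U (khm p o q)))
  | fiveKhmU (p o q) : Deriv ((neg (khm p o q)).imp (U (neg (khm p o q))))
  | empKhm (p q) : Deriv ((U (p.imp q)).imp (khm p falsum q))
  | compKhm (p o r q) :
      Deriv ((((khm p o r).and (khm r o q)).and (U (r.imp o))).imp (khm p o q))
  | oneKhm (p o q) :
      Deriv (((khm p o q).and (neg (khm p falsum q))).imp (khm p falsum o))
  | uKhm (p' p o o' q q') :
      Deriv (((((U (p'.imp p)).and (U (o.imp o'))).and (U (q.imp q'))).and
        (khm p o q)).imp (khm p' o' q'))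
  | mp {φ ψ} : Deriv (φ.imp ψ) → Deriv φ → Deriv ψ
  | necU {φ} : Deriv φ → Deriv (U φ)
  | sub {φ} (f : ℕ → Formula) : Deriv φ → Deriv (φ.subst f)

/-- Conjunction of a finite list of formulas. -/
def conjList : List Formula → Formula
  | [] => Formula.top
  | φ :: L => φ.and (conjList L)

/-- A set of formulas is SKHM-consistent if no finite conjunction of its
members has its negation derivable in SKHM. -/
def ConsistentSet (Γ : Set Formula) : Prop :=
  ∀ L : List Formula, (∀ φ ∈ L, φ ∈ Γ) → ¬ Deriv (Formula.neg (conjList L))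

/-- Maximal SKHM-consistent set. -/
def MCS (Γ : Set Formula) : Prop :=
  ConsistentSet Γ ∧ ∀ Δ, ConsistentSet Δ → Γ ⊆ Δ → Δ = Γ

/-- `Δ|Khm`: the positive `Khm`-formulas of `Δ`. -/
def khmPart (Δ : Set Formula) : Set Formula :=
  {θ ∈ Δ | ∃ ψ χ φ, θ = Formula.khm ψ χ φ}

/-- `Φ_Γ`: the set of all MCSs `Δ` with `Δ|Khm = Γ|Khm`. -/
def PhiGamma (Γ : Set Formula) : Set (Set Formula) :=
  {Δ | MCS Δ ∧ khmPart Δ = khmPart Γ}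

/-- Canonical action symbols: `⟨ψ,⊥,φ⟩` (`one ψ φ`) and `⟨χ^ψ,φ⟩` (`two χ ψ φ`). -/
inductive CanAct : Type
  | one : Formula → Formula → CanAct
  | two : Formula → Formula → Formula → CanAct
deriving DecidableEq

/-- The formula in the last component of a canonical action. -/
def CanAct.post : CanAct → Formula
  | .one _ φ => φ
  | .two _ _ φ => φ

/-- The canonical action set
`Σ_Γ = {⟨ψ,⊥,φ⟩ : Khm(ψ,⊥,φ) ∈ Γ} ∪ {⟨χ^ψ,φ⟩ : Khm(ψ,χ,φ) ∈ Γ, ¬Khm(ψ,⊥,φ) ∈ Γ}`. -/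
def SigmaGamma (Γ : Set Formula) : Set CanAct :=
  {a | (∃ ψ φ, a = CanAct.one ψ φ ∧ Formula.khm ψ Formula.falsum φ ∈ Γ) ∨
       (∃ χ ψ φ, a = CanAct.two χ ψ φ ∧ Formula.khm ψ χ φ ∈ Γ ∧
          Formula.neg (Formula.khm ψ Formula.falsum φ) ∈ Γ)}

/-- Canonical states: pairs `(Δ, χ^ψ)` (the marker `χ^ψ` is the pair `(χ, ψ)`)
with `χ ∈ Δ ∈ Φ_Γ`, and either `⟨χ^ψ,φ⟩ ∈ Σ_Γ` for some `φ`, or `⟨ψ,⊥,χ⟩ ∈ Σ_Γ`. -/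
def CanStates (Γ : Set Formula) : Set (Set Formula × Formula × Formula) :=
  {w | w.1 ∈ PhiGamma Γ ∧ w.2.1 ∈ w.1 ∧
       ((∃ φ, CanAct.two w.2.1 w.2.2 φ ∈ SigmaGamma Γ) ∨
        CanAct.one w.2.2 w.2.1 ∈ SigmaGamma Γ)}

/-- The canonical model `M^c_Γ` over the action set `Σ_Γ`. For a canonical state
`w`, `L(w) = w.1.1` and `R(w) = w.1.2`. -/
def canonicalModel (Γ : Set Formula) : Model {a : CanAct // a ∈ SigmaGamma Γ} where
  S := {w : Set Formula × Formula × Formula // w ∈ CanStates Γ}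
  R a w w' :=
    match a.1 with
    | CanAct.one ψ φ => ψ ∈ w.1.1 ∧ w'.1.2 = (φ, ψ)
    | CanAct.two χ ψ φ => w.1.2 = (χ, ψ) ∧ φ ∈ w'.1.1
  V w := {n | Formula.atom n ∈ w.1.1}

open Formula

/-! ### Boolean evaluation helpers -/

lemma evalB_neg (v) (φ : Formula) : evalB v (neg φ) = !evalB v φ := rfl
lemma evalB_and (v) (φ ψ : Formula) : evalB v (and φ ψ) = (evalB v φ && evalB v ψ) := rfl
lemma evalB_imp (v) (φ ψ : Formula) :
    evalB v (imp φ ψ) = (!(evalB v φ && !evalB v ψ)) := rfl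
lemma evalB_falsum (v) : evalB v falsum = false := by
  show (evalB v (atom 0) && !evalB v (atom 0)) = false
  cases h : evalB v (atom 0) <;> simp
lemma evalB_top (v) : evalB v Formula.top = true := by
  show (!evalB v falsum) = true
  rw [evalB_falsum]; rfl

lemma evalB_conjList (v) : ∀ L : List Formula,
    evalB v (conjList L) = true ↔ ∀ φ ∈ L, evalB v φ = true := by
  intro L; induction L with
  | nil => simp [conjList, evalB_top]
  | cons a L ih =>
      show (evalB v a && evalB v (conjList L)) = true ↔ _
      rw [Bool.and_eq_true, ih]; simp

/-! ### Derivation toolkit -/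

namespace Deriv

lemma taut_imp {A B : Formula} (h : ∀ v, evalB v A = true → evalB v B = true) :
    Deriv (A.imp B) := by
  apply Deriv.taut
  intro v
  rw [evalB_imp]
  cases hA : evalB v A
  · rfl
  · rw [h v hA]; rfl

lemma imp_self (A : Formula) : Deriv (A.imp A) := taut_imp fun _ h => h

lemma imp_trans {A B C : Formula} (h1 : Deriv (A.imp B)) (h2 : Deriv (B.imp C)) :
    Deriv (A.imp C) := by
  have t : Deriv ((A.imp B).imp ((B.imp C).imp (A.imp C))) := by
    apply Deriv.taut
    intro v
    simp only [evalB_imp]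
    cases hA : evalB v A <;> cases hB : evalB v B <;> cases hC : evalB v C <;> rfl
  exact (t.mp h1).mp h2

lemma contrapose {A B : Formula} (h : Deriv (A.imp B)) :
    Deriv ((neg B).imp (neg A)) := by
  have t : Deriv ((A.imp B).imp ((neg B).imp (neg A))) := by
    apply Deriv.taut
    intro v
    simp only [evalB_imp, evalB_neg]
    cases hA : evalB v A <;> cases hB : evalB v B <;> rfl
  exact t.mp h

lemma and_intro {A B : Formula} (h1 : Deriv A) (h2 : Deriv B) : Deriv (A.and B) := by
  have t : Deriv (A.imp (B.imp (A.and B))) := by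
    apply Deriv.taut
    intro v
    simp only [evalB_imp, evalB_and]
    cases hA : evalB v A <;> cases hB : evalB v B <;> rfl
  exact (t.mp h1).mp h2

/-- From the axiom shape `(((W∧X)∧Y)∧Z) → R` with `W, X, Y` derivable, get `Z → R`. -/
lemma peel3 {W X Y Z R : Formula} (hax : Deriv (((((W.and X).and Y).and Z)).imp R))
    (hW : Deriv W) (hX : Deriv X) (hY : Deriv Y) : Deriv (Z.imp R) := by
  have t : Deriv (((((W.and X).and Y).and Z).imp R).imp
      (W.imp (X.imp (Y.imp (Z.imp R))))) := by
    apply Deriv.taut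
    intro v
    simp only [evalB_imp, evalB_and]
    cases hW' : evalB v W <;> cases hX' : evalB v X <;> cases hY' : evalB v Y <;>
      cases hZ' : evalB v Z <;> cases hR' : evalB v R <;> rfl
  exact (((t.mp hax).mp hW).mp hX).mp hY

/-- Monotonicity of `khm` (derivable-implication version). -/
lemma khm_mono {p p' o o' q q' : Formula} (hp : Deriv (p'.imp p))
    (ho : Deriv (o.imp o')) (hq : Deriv (q.imp q')) :
    Deriv ((khm p o q).imp (khm p' o' q')) :=
  peel3 (Deriv.uKhm p' p o o' q q') (hp.necU) (ho.necU) (hq.necU)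

lemma U_mono {A B : Formula} (h : Deriv (A.imp B)) : Deriv ((U A).imp (U B)) :=
  khm_mono (contrapose h) (imp_self _) (imp_self _)

/-- `Khm(p,o,⊥) → U ¬p`. -/
lemma khm_bot_U_neg (p o : Formula) : Deriv ((khm p o falsum).imp (U (neg p))) :=
  khm_mono (taut_imp (by intro v; simp only [evalB_neg]; cases h : evalB v p <;> simp))
    (taut_imp (by intro v; intro _; rw [evalB_top]))
    (imp_self _)

lemma U_dist {A B : Formula} (h : Deriv (U (A.imp B))) : Deriv ((U A).imp (U B)) := by
  have t : Deriv ((((U A).and (U (A.imp B))).imp (U B)).imp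
      ((U (A.imp B)).imp ((U A).imp (U B)))) := by
    apply Deriv.taut
    intro v
    simp only [evalB_imp, evalB_and]
    cases h1 : evalB v (U A) <;> cases h2 : evalB v (U (A.imp B)) <;>
      cases h3 : evalB v (U B) <;> rfl
  exact (t.mp (Deriv.distU A B)).mp h

/-- `U p ∧ U q → U (p ∧ q)` packaged as two hypotheses. -/
lemma U_and {A B : Formula} (hA : Deriv (U A)) (hB : Deriv (U B)) :
    Deriv (U (A.and B)) := by
  have t : Deriv (A.imp (B.imp (A.and B))) := by
    apply Deriv.taut
    intro v
    simp only [evalB_imp, evalB_and]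
    cases h1 : evalB v A <;> cases h2 : evalB v B <;> rfl
  exact (U_dist ((U_dist t.necU).mp hA)).mp hB
end Deriv

/-! ### Consistency and maximal consistent sets -/

lemma Deriv.imp_intro {A B : Formula} (h : Deriv B) : Deriv (A.imp B) := by
  have t : Deriv (B.imp (A.imp B)) := by
    apply Deriv.taut
    intro v
    simp only [evalB_imp]
    cases hA : evalB v A <;> cases hB : evalB v B <;> rfl
  exact t.mp h

lemma conj_imp_of_subset {L M : List Formula} (h : ∀ φ ∈ L, φ ∈ M) :
    Deriv ((conjList M).imp (conjList L)) :=
  Deriv.taut_imp (by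
    intro v hv
    rw [evalB_conjList] at hv ⊢
    exact fun φ hφ => hv φ (h φ hφ))

/-- If `conj L → X` and `conj M → ¬X` are derivable, then `¬ conj (L ++ M)` is. -/
lemma conj_contra {L M : List Formula} {X : Formula}
    (h1 : Deriv ((conjList L).imp X)) (h2 : Deriv ((conjList M).imp (neg X))) :
    Deriv (neg (conjList (L ++ M))) := by
  have s1 : Deriv ((conjList (L ++ M)).imp (conjList L)) :=
    conj_imp_of_subset (fun φ hφ => List.mem_append_left _ hφ)
  have s2 : Deriv ((conjList (L ++ M)).imp (conjList M)) :=
    conj_imp_of_subset (fun φ hφ => List.mem_append_right _ hφ)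
  have t : Deriv (((conjList L).imp X).imp
      (((conjList M).imp (neg X)).imp
        (((conjList (L ++ M)).imp (conjList L)).imp
          (((conjList (L ++ M)).imp (conjList M)).imp (neg (conjList (L ++ M))))))) := by
    apply Deriv.taut
    intro v
    simp only [evalB_imp, evalB_neg]
    cases hL : evalB v (conjList L) <;> cases hM : evalB v (conjList M) <;>
      cases hX : evalB v X <;> cases hD : evalB v (conjList (L ++ M)) <;> rfl
  exact (((t.mp h1).mp h2).mp s1).mp s2

lemma inconsistent_insert {Γ : Set Formula} {φ : Formula}
    (h : ¬ ConsistentSet (insert φ Γ)) :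
    ∃ L : List Formula, (∀ ψ ∈ L, ψ ∈ Γ) ∧ Deriv ((conjList L).imp (neg φ)) := by
  unfold ConsistentSet at h
  push_neg at h
  obtain ⟨L, hL, hd⟩ := h
  classical
  refine ⟨L.filter (fun ψ => ψ ≠ φ), ?_, ?_⟩
  · intro ψ hψ
    rw [List.mem_filter] at hψ
    rcases hL ψ hψ.1 with h' | h'
    · exact absurd h' (by simpa using hψ.2)
    · exact h'
  · have hsub : Deriv ((conjList (φ :: L.filter (fun ψ => ψ ≠ φ))).imp (conjList L)) := by
      apply conj_imp_of_subset
      intro ψ hψ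
      by_cases heq : ψ = φ
      · exact heq ▸ List.mem_cons_self
      · exact List.mem_cons_of_mem _ (List.mem_filter.2 ⟨hψ, by simpa using heq⟩)
    set C := conjList (L.filter (fun ψ => ψ ≠ φ)) with hC
    have hstep : conjList (φ :: L.filter (fun ψ => ψ ≠ φ)) = φ.and C := rfl
    rw [hstep] at hsub
    have t : Deriv ((neg (conjList L)).imp
        (((φ.and C).imp (conjList L)).imp (C.imp (neg φ)))) := by
      apply Deriv.taut
      intro v
      simp only [evalB_imp, evalB_neg, evalB_and]
      cases h1 : evalB v (conjList L) <;> cases h2 : evalB v φ <;>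
        cases h3 : evalB v C <;> rfl
    exact (t.mp hd).mp hsub

namespace MCS

variable {Γ : Set Formula}

lemma consistent (h : MCS Γ) : ConsistentSet Γ := h.1

lemma mem_of_conj_imp (h : MCS Γ) {L : List Formula} {α : Formula}
    (hL : ∀ ψ ∈ L, ψ ∈ Γ) (hd : Deriv ((conjList L).imp α)) : α ∈ Γ := by
  by_contra hα
  have hins : ¬ ConsistentSet (insert α Γ) := by
    intro hcon
    have := h.2 _ hcon (Set.subset_insert _ _)
    exact hα (this ▸ Set.mem_insert _ _)
  obtain ⟨M, hM, hd2⟩ := inconsistent_insert hins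
  exact h.1 (L ++ M)
    (by intro ψ hψ; rcases List.mem_append.1 hψ with h' | h'
        exacts [hL ψ h', hM ψ h'])
    (conj_contra hd hd2)

lemma mem_of_deriv (h : MCS Γ) {α : Formula} (hd : Deriv α) : α ∈ Γ :=
  h.mem_of_conj_imp (L := []) (by simp) (Deriv.imp_intro hd)

lemma closure (h : MCS Γ) {α β : Formula} (hα : α ∈ Γ) (hd : Deriv (α.imp β)) :
    β ∈ Γ := by
  apply h.mem_of_conj_imp (L := [α]) (by simpa using hα)
  have hstep : conjList [α] = α.and Formula.top := rfl
  rw [hstep]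
  refine Deriv.imp_trans (Deriv.taut_imp ?_) hd
  intro v hv
  rw [evalB_and, Bool.and_eq_true] at hv
  exact hv.1

lemma mp_mem (h : MCS Γ) {α β : Formula} (hi : α.imp β ∈ Γ) (hα : α ∈ Γ) : β ∈ Γ := by
  apply h.mem_of_conj_imp (L := [α.imp β, α]) (by simp [hi, hα])
  apply Deriv.taut_imp
  intro v hv
  rw [evalB_conjList] at hv
  have h1 := hv _ (by simp : (α.imp β) ∈ [α.imp β, α])
  have h2 := hv _ (by simp : α ∈ [α.imp β, α])
  rw [evalB_imp, h2] at h1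
  cases hβ : evalB v β
  · rw [hβ] at h1; exact absurd h1 (by simp)
  · rfl

lemma not_both (h : MCS Γ) {α : Formula} (h1 : α ∈ Γ) (h2 : neg α ∈ Γ) : False := by
  apply h.1 [α, neg α] (by simp [h1, h2])
  apply Deriv.taut
  intro v
  rw [evalB_neg,
    show evalB v (conjList [α, neg α])
        = (evalB v α && (evalB v (neg α) && evalB v Formula.top)) from rfl,
    evalB_neg, evalB_top]
  cases hα : evalB v α <;> rfl

lemma mem_or_neg_mem (h : MCS Γ) (α : Formula) : α ∈ Γ ∨ neg α ∈ Γ := by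
  by_contra hcon
  push_neg at hcon
  obtain ⟨h1, h2⟩ := hcon
  have hi1 : ¬ ConsistentSet (insert α Γ) := by
    intro hcon'
    exact h1 ((h.2 _ hcon' (Set.subset_insert _ _)) ▸ Set.mem_insert _ _)
  have hi2 : ¬ ConsistentSet (insert (neg α) Γ) := by
    intro hcon'
    exact h2 ((h.2 _ hcon' (Set.subset_insert _ _)) ▸ Set.mem_insert _ _)
  obtain ⟨L, hL, hd1⟩ := inconsistent_insert hi1
  obtain ⟨M, hM, hd2⟩ := inconsistent_insert hi2
  exact h.1 (L ++ M)
    (by intro ψ hψ; rcases List.mem_append.1 hψ with h' | h'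
        exacts [hL ψ h', hM ψ h'])
    (conj_contra hd1 hd2)

lemma neg_mem_iff (h : MCS Γ) {α : Formula} : neg α ∈ Γ ↔ α ∉ Γ := by
  constructor
  · intro h1 h2; exact h.not_both h2 h1
  · intro h1; rcases h.mem_or_neg_mem α with h' | h'
    exacts [absurd h' h1, h']

lemma and_mem_iff (h : MCS Γ) {α β : Formula} : α.and β ∈ Γ ↔ α ∈ Γ ∧ β ∈ Γ := by
  constructor
  · intro h1
    constructor
    · exact h.closure h1 (Deriv.taut_imp (by
        intro v hv; rw [evalB_and, Bool.and_eq_true] at hv; exact hv.1))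
    · exact h.closure h1 (Deriv.taut_imp (by
        intro v hv; rw [evalB_and, Bool.and_eq_true] at hv; exact hv.2))
  · rintro ⟨h1, h2⟩
    apply h.mem_of_conj_imp (L := [α, β]) (by simp [h1, h2])
    apply Deriv.taut_imp
    intro v hv
    rw [evalB_conjList] at hv
    rw [evalB_and, Bool.and_eq_true]
    exact ⟨hv α (by simp), hv β (by simp)⟩

lemma imp_mem_of (h : MCS Γ) {α β : Formula} (hi : α ∈ Γ → β ∈ Γ) : α.imp β ∈ Γ := by
  rcases h.mem_or_neg_mem α with h' | h'
  · exact h.closure (hi h') (Deriv.taut_imp (by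
      intro v hv; rw [evalB_imp]; cases hα : evalB v α <;> simp [hv]))
  · exact h.closure h' (Deriv.taut_imp (by
      intro v hv; rw [evalB_neg] at hv; rw [evalB_imp]
      have hfa : evalB v α = false := by
        cases hα : evalB v α
        · rfl
        · rw [hα] at hv; exact absurd hv (by simp)
      rw [hfa]; rfl))

end MCS

/-- Lindenbaum's lemma. -/
lemma lindenbaum {Γ : Set Formula} (h : ConsistentSet Γ) : ∃ Δ, Γ ⊆ Δ ∧ MCS Δ := by
  have hzorn : ∀ c ⊆ {Δ : Set Formula | ConsistentSet Δ}, IsChain (· ⊆ ·) c →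
      c.Nonempty → ∃ ub ∈ {Δ : Set Formula | ConsistentSet Δ}, ∀ s ∈ c, s ⊆ ub := by
    intro c hcS hchain hcne
    refine ⟨⋃₀ c, ?_, fun s hs => Set.subset_sUnion_of_mem hs⟩
    intro L hL hd
    have key : ∀ L' : List Formula, (∀ φ ∈ L', φ ∈ ⋃₀ c) → ∃ Δ ∈ c, ∀ φ ∈ L', φ ∈ Δ := by
      intro L'
      induction L' with
      | nil => intro _; obtain ⟨Δ, hΔ⟩ := hcne; exact ⟨Δ, hΔ, by simp⟩
      | cons a L' ih =>
          intro hmem'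
          obtain ⟨Δ, hΔc, hΔ⟩ := ih (fun φ hφ => hmem' φ (List.mem_cons_of_mem _ hφ))
          obtain ⟨Δ', hΔ'c, ha⟩ := hmem' a (List.mem_cons_self)
          obtain ⟨Δ'', hΔ''c, h1, h2⟩ := hchain.directedOn Δ hΔc Δ' hΔ'c
          exact ⟨Δ'', hΔ''c, by
            intro φ hφ
            rcases List.mem_cons.1 hφ with rfl | hφ'
            exacts [h2 ha, h1 (hΔ φ hφ')]⟩
    obtain ⟨Δ, hΔc, hall⟩ := key L hL
    exact hcS hΔc L hall hd
  obtain ⟨m, hsub, hmem, hmax⟩ :=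
    zorn_subset_nonempty {Δ : Set Formula | ConsistentSet Δ} hzorn Γ h
  exact ⟨m, hsub, hmem, fun Δ hΔ hsubΔ => Set.Subset.antisymm (hmax hΔ hsubΔ) hsubΔ⟩

/-! ### Khm literals and the sets `Φ_Γ` -/

/-- The `Khm`-literals of a set: positive `khm` formulas in it together with
negations of `khm` formulas whose negation is in it. -/
def KhmLits (Γ : Set Formula) : Set Formula :=
  {θ | (∃ p o q, θ = Formula.khm p o q) ∧ θ ∈ Γ} ∪
  {θ | (∃ p o q, θ = neg (Formula.khm p o q)) ∧ θ ∈ Γ}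

lemma khmLits_subset {Γ : Set Formula} : KhmLits Γ ⊆ Γ := by
  rintro θ (⟨_, hθ⟩ | ⟨_, hθ⟩) <;> exact hθ

lemma khmLits_U {Γ : Set Formula} {θ : Formula} (h : θ ∈ KhmLits Γ) :
    Deriv (θ.imp (U θ)) := by
  rcases h with ⟨⟨p, o, q, rfl⟩, _⟩ | ⟨⟨p, o, q, rfl⟩, _⟩
  · exact Deriv.fourKhmU p o q
  · exact Deriv.fiveKhmU p o q

lemma deriv_top : Deriv Formula.top :=
  Deriv.taut (fun v => evalB_top v)

/-- If `conj K → X` is derivable with `K` a list of Khm-literals of the MCS `Γ`,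
then `U X ∈ Γ`. -/
lemma U_mem_of_lits {Γ : Set Formula} (hΓ : MCS Γ) :
    ∀ (K : List Formula), (∀ κ ∈ K, κ ∈ KhmLits Γ) →
      ∀ X : Formula, Deriv ((conjList K).imp X) → U X ∈ Γ := by
  intro K
  induction K with
  | nil =>
      intro _ X hd
      have hX : Deriv X := hd.mp deriv_top
      exact hΓ.mem_of_deriv hX.necU
  | cons κ K ih =>
      intro hmem X hd
      have hshift : Deriv ((conjList K).imp (κ.imp X)) := by
        have hstep : conjList (κ :: K) = κ.and (conjList K) := rfl
        rw [hstep] at hd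
        have t : Deriv (((κ.and (conjList K)).imp X).imp
            ((conjList K).imp (κ.imp X))) := by
          apply Deriv.taut
          intro v
          simp only [evalB_imp, evalB_and]
          cases h1 : evalB v κ <;> cases h2 : evalB v (conjList K) <;>
            cases h3 : evalB v X <;> rfl
        exact t.mp hd
      have hUκX : U (κ.imp X) ∈ Γ :=
        ih (fun κ' h' => hmem κ' (List.mem_cons_of_mem _ h')) _ hshift
      have hκlit := hmem κ (List.mem_cons_self)
      have hUκ : U κ ∈ Γ := hΓ.closure (khmLits_subset hκlit) (khmLits_U hκlit)
      have hdist : ((U κ).and (U (κ.imp X))).imp (U X) ∈ Γ :=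
        hΓ.mem_of_deriv (Deriv.distU κ X)
      exact hΓ.mp_mem hdist (hΓ.and_mem_iff.2 ⟨hUκ, hUκX⟩)

lemma mem_khmPart {Δ : Set Formula} {θ : Formula} :
    θ ∈ khmPart Δ ↔ θ ∈ Δ ∧ ∃ p o q, θ = Formula.khm p o q := Iff.rfl

/-- Existence of an MCS in `Φ_Γ` containing `α`, given `¬U¬α ∈ Γ`. -/
lemma exists_mcs_phi {Γ : Set Formula} (hΓ : MCS Γ) {α : Formula}
    (hα : neg (U (neg α)) ∈ Γ) : ∃ Δ ∈ PhiGamma Γ, α ∈ Δ := by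
  have hcons : ConsistentSet (insert α (KhmLits Γ)) := by
    by_contra hcon
    obtain ⟨K, hK, hd⟩ := inconsistent_insert hcon
    have hU : U (neg α) ∈ Γ := U_mem_of_lits hΓ K hK _ hd
    exact hΓ.not_both hU hα
  obtain ⟨Δ, hsub, hΔ⟩ := lindenbaum hcons
  refine ⟨Δ, ⟨hΔ, ?_⟩, hsub (Set.mem_insert _ _)⟩
  apply Set.eq_of_subset_of_subset
  · rintro θ ⟨hθΔ, p, o, q, rfl⟩
    refine ⟨?_, p, o, q, rfl⟩
    by_contra hθΓ
    have hnegΓ : neg (Formula.khm p o q) ∈ Γ := (hΓ.neg_mem_iff).2 hθΓ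
    have hnegΔ : neg (Formula.khm p o q) ∈ Δ :=
      hsub (Set.mem_insert_of_mem _ (Or.inr ⟨⟨p, o, q, rfl⟩, hnegΓ⟩))
    exact hΔ.not_both hθΔ hnegΔ
  · rintro θ ⟨hθΓ, p, o, q, rfl⟩
    exact ⟨hsub (Set.mem_insert_of_mem _ (Or.inl ⟨⟨p, o, q, rfl⟩, hθΓ⟩)), p, o, q, rfl⟩

lemma phi_self {Γ : Set Formula} (hΓ : MCS Γ) : Γ ∈ PhiGamma Γ := ⟨hΓ, rfl⟩

lemma phi_mcs {Γ Δ : Set Formula} (hΔ : Δ ∈ PhiGamma Γ) : MCS Δ := hΔ.1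

lemma khm_mem_iff_phi {Γ Δ : Set Formula} (hΓ : MCS Γ) (hΔ : Δ ∈ PhiGamma Γ)
    {p o q : Formula} : Formula.khm p o q ∈ Δ ↔ Formula.khm p o q ∈ Γ := by
  constructor
  · intro h
    have : Formula.khm p o q ∈ khmPart Γ := hΔ.2 ▸ (⟨h, p, o, q, rfl⟩ : _ ∈ khmPart Δ)
    exact this.1
  · intro h
    have : Formula.khm p o q ∈ khmPart Δ := hΔ.2.symm ▸ (⟨h, p, o, q, rfl⟩ : _ ∈ khmPart Γ)
    exact this.1

lemma U_mem_all {Γ Δ : Set Formula} (hΓ : MCS Γ) (hΔ : Δ ∈ PhiGamma Γ)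
    {β : Formula} (h : U β ∈ Γ) : β ∈ Δ := by
  have hUΔ : U β ∈ Δ := (khm_mem_iff_phi hΓ hΔ).2 h
  exact (phi_mcs hΔ).mp_mem ((phi_mcs hΔ).mem_of_deriv (Deriv.tU β)) hUΔ

lemma U_of_all_phi {Γ : Set Formula} (hΓ : MCS Γ) {α : Formula}
    (h : ∀ Δ ∈ PhiGamma Γ, α ∈ Δ) : U α ∈ Γ := by
  by_contra hU
  have hneg : neg (U α) ∈ Γ := hΓ.neg_mem_iff.2 hU
  have hmono : Deriv ((U (neg (neg α))).imp (U α)) :=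
    Deriv.U_mono (Deriv.taut_imp (by
      intro v hv
      simp only [evalB_neg] at hv ⊢
      cases h' : evalB v α
      · rw [h'] at hv; exact absurd hv (by simp)
      · rfl))
  have : neg (U (neg (neg α))) ∈ Γ := hΓ.closure hneg (Deriv.contrapose hmono)
  obtain ⟨Δ, hΔ, hmem⟩ := exists_mcs_phi hΓ this
  exact (phi_mcs hΔ).not_both (h Δ hΔ) hmem

lemma U_imp_of_all {Γ : Set Formula} (hΓ : MCS Γ) {g h : Formula}
    (hall : ∀ Δ ∈ PhiGamma Γ, g ∈ Δ → h ∈ Δ) : U (g.imp h) ∈ Γ :=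
  U_of_all_phi hΓ (fun Δ hΔ => (phi_mcs hΔ).imp_mem_of (hall Δ hΔ))

/-! ### Γ-level modal closure helpers -/

lemma khm_mono_mem {Γ : Set Formula} (hΓ : MCS Γ) {p p' o o' q q' : Formula}
    (h : Formula.khm p o q ∈ Γ)
    (hp : U (p'.imp p) ∈ Γ) (ho : U (o.imp o') ∈ Γ) (hq : U (q.imp q') ∈ Γ) :
    Formula.khm p' o' q' ∈ Γ := by
  have hax := hΓ.mem_of_deriv (Deriv.uKhm p' p o o' q q')
  exact hΓ.mp_mem hax
    (hΓ.and_mem_iff.2 ⟨hΓ.and_mem_iff.2 ⟨hΓ.and_mem_iff.2 ⟨hp, ho⟩, hq⟩, h⟩)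

lemma khm_mono_mem' {Γ : Set Formula} (hΓ : MCS Γ) {p p' o o' q q' : Formula}
    (h : Formula.khm p o q ∈ Γ)
    (hp : Deriv (p'.imp p)) (ho : Deriv (o.imp o')) (hq : Deriv (q.imp q')) :
    Formula.khm p' o' q' ∈ Γ :=
  khm_mono_mem hΓ h (hΓ.mem_of_deriv hp.necU) (hΓ.mem_of_deriv ho.necU)
    (hΓ.mem_of_deriv hq.necU)

lemma comp_mem {Γ : Set Formula} (hΓ : MCS Γ) {p o r q : Formula}
    (h1 : Formula.khm p o r ∈ Γ) (h2 : Formula.khm r o q ∈ Γ)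
    (h3 : U (r.imp o) ∈ Γ) : Formula.khm p o q ∈ Γ := by
  have hax := hΓ.mem_of_deriv (Deriv.compKhm p o r q)
  exact hΓ.mp_mem hax (hΓ.and_mem_iff.2 ⟨hΓ.and_mem_iff.2 ⟨h1, h2⟩, h3⟩)

lemma deriv_falsum_imp (β : Formula) : Deriv (falsum.imp β) :=
  Deriv.taut_imp (by intro v hv; rw [evalB_falsum] at hv; exact absurd hv (by simp))

lemma khm_emp_mem {Γ : Set Formula} (hΓ : MCS Γ) {p q : Formula}
    (h : U (p.imp q) ∈ Γ) : Formula.khm p falsum q ∈ Γ :=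
  hΓ.mp_mem (hΓ.mem_of_deriv (Deriv.empKhm p q)) h

lemma khm_falsum_any {Γ : Set Formula} (hΓ : MCS Γ) (q : Formula) :
    Formula.khm falsum falsum q ∈ Γ :=
  khm_emp_mem hΓ (hΓ.mem_of_deriv (deriv_falsum_imp q).necU)

/-- If `khm ψ o α ∈ Γ` and `ψ` is realized in some `Δ ∈ Φ_Γ`, then `α` is
realized in some `Δ' ∈ Φ_Γ`. -/
lemma exists_phi_of_khm {Γ : Set Formula} (hΓ : MCS Γ) {ψ o α : Formula}
    (hkh : Formula.khm ψ o α ∈ Γ) (hψ : ∃ Δ ∈ PhiGamma Γ, ψ ∈ Δ) :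
    ∃ Δ ∈ PhiGamma Γ, α ∈ Δ := by
  by_contra hno
  push_neg at hno
  have hUnegα : U (neg α) ∈ Γ :=
    U_of_all_phi hΓ (fun Δ hΔ => (phi_mcs hΔ).neg_mem_iff.2 (hno Δ hΔ))
  have hUimp : U (α.imp falsum) ∈ Γ := by
    refine hΓ.closure hUnegα (Deriv.U_mono (Deriv.taut_imp ?_))
    intro v hv
    rw [evalB_neg] at hv
    rw [evalB_imp, evalB_falsum]
    cases h' : evalB v α
    · rfl
    · rw [h'] at hv; exact absurd hv (by simp)
  have hbot : Formula.khm ψ o falsum ∈ Γ :=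
    khm_mono_mem hΓ hkh (hΓ.mem_of_deriv (Deriv.imp_self ψ).necU)
      (hΓ.mem_of_deriv (Deriv.imp_self o).necU) hUimp
  have hUnegψ : U (neg ψ) ∈ Γ := hΓ.closure hbot (Deriv.khm_bot_U_neg ψ o)
  obtain ⟨Δψ, hΔψ, hmem⟩ := hψ
  exact (phi_mcs hΔψ).not_both hmem (U_mem_all hΓ hΔψ hUnegψ)

/-! ### Countability -/

def Formula.encNat : Formula → ℕ
  | .atom n => Nat.pair 0 n
  | .neg φ => Nat.pair 1 φ.encNat
  | .and φ ψ => Nat.pair 2 (Nat.pair φ.encNat ψ.encNat)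
  | .khm φ χ ψ => Nat.pair 3 (Nat.pair φ.encNat (Nat.pair χ.encNat ψ.encNat))

lemma Formula.encNat_injective : ∀ φ ψ : Formula, φ.encNat = ψ.encNat → φ = ψ := by
  intro φ
  induction φ with
  | atom n =>
      intro ψ h
      cases ψ <;> simp only [encNat, Nat.pair_eq_pair] at h
      · rw [h.2]
      all_goals exact absurd h.1 (by decide)
  | neg φ ih =>
      intro ψ h
      cases ψ <;> simp only [encNat, Nat.pair_eq_pair] at h
      case neg φ' => rw [ih φ' h.2]
      all_goals exact absurd h.1 (by decide)
  | and φ₁ φ₂ ih1 ih2 =>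
      intro ψ h
      cases ψ <;> simp only [encNat, Nat.pair_eq_pair] at h
      case and ψ₁ ψ₂ => rw [ih1 ψ₁ h.2.1, ih2 ψ₂ h.2.2]
      all_goals exact absurd h.1 (by decide)
  | khm φ₁ φ₂ φ₃ ih1 ih2 ih3 =>
      intro ψ h
      cases ψ <;> simp only [encNat, Nat.pair_eq_pair] at h
      case khm ψ₁ ψ₂ ψ₃ => rw [ih1 ψ₁ h.2.1, ih2 ψ₂ h.2.2.1, ih3 ψ₃ h.2.2.2]
      all_goals exact absurd h.1 (by decide)

instance : Countable Formula :=
  ⟨⟨Formula.encNat, fun _ _ h => Formula.encNat_injective _ _ h⟩⟩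

def CanAct.encNat : CanAct → ℕ
  | .one p q => Nat.pair 0 (Nat.pair p.encNat q.encNat)
  | .two p q r => Nat.pair 1 (Nat.pair p.encNat (Nat.pair q.encNat r.encNat))

instance : Countable CanAct := by
  refine ⟨⟨CanAct.encNat, ?_⟩⟩
  intro a b h
  cases a <;> cases b <;> simp only [CanAct.encNat, Nat.pair_eq_pair] at h
  case one.one =>
    rw [Formula.encNat_injective _ _ h.2.1, Formula.encNat_injective _ _ h.2.2]
  case two.two =>
    rw [Formula.encNat_injective _ _ h.2.1, Formula.encNat_injective _ _ h.2.2.1,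
      Formula.encNat_injective _ _ h.2.2.2]
  all_goals exact absurd h.1 (by decide)

/-! ### Generic model lemmas -/

lemma Model.bigStep_nil {Act : Type} {M : Model Act} {w t : M.S} :
    M.bigStep [] w t ↔ w = t := Iff.rfl

lemma Model.bigStep_cons {Act : Type} {M : Model Act} {a : Act} {σ : List Act}
    {w t : M.S} : M.bigStep (a :: σ) w t ↔ ∃ u, M.R a w u ∧ M.bigStep σ u t := Iff.rfl

lemma Model.stronglyExec_cons {Act : Type} {M : Model Act} {a : Act} {σ : List Act}
    {w : M.S} : M.stronglyExec (a :: σ) w ↔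
      (∃ u, M.R a w u) ∧ ∀ u, M.R a w u → M.stronglyExec σ u := by
  constructor
  · intro h
    constructor
    · exact h 0 (by simp) w rfl
    · intro u hu k hk t ht
      exact h (k + 1) (by simpa using Nat.succ_lt_succ hk) t ⟨u, hu, ht⟩
  · rintro ⟨⟨u₀, hu₀⟩, hrest⟩ k hk t ht
    cases k with
    | zero =>
        cases ht
        exact ⟨u₀, hu₀⟩
    | succ k =>
        obtain ⟨u, hu, ht'⟩ := ht
        exact hrest u hu k (by simpa using Nat.succ_lt_succ_iff.1 hk) t ht'

/-! ### Canonical model: structure lemmas -/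

section Canonical

variable {Γ : Set Formula}

/-- Action symbols of the canonical model. -/
abbrev ActG (Γ : Set Formula) := {a : CanAct // a ∈ SigmaGamma Γ}

lemma state_phi (w : (canonicalModel Γ).S) : w.1.1 ∈ PhiGamma Γ := w.2.1

lemma state_mcs (w : (canonicalModel Γ).S) : MCS w.1.1 := w.2.1.1

lemma state_marker_mem (w : (canonicalModel Γ).S) : w.1.2.1 ∈ w.1.1 := w.2.2.1

lemma R_one {hp : CanAct.one ψ' g' ∈ SigmaGamma Γ} {w u : (canonicalModel Γ).S} :
    (canonicalModel Γ).R ⟨CanAct.one ψ' g', hp⟩ w u ↔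
      ψ' ∈ w.1.1 ∧ u.1.2 = (g', ψ') := Iff.rfl

lemma R_two {hp : CanAct.two χ₂ ψ₂ g'' ∈ SigmaGamma Γ} {w u : (canonicalModel Γ).S} :
    (canonicalModel Γ).R ⟨CanAct.two χ₂ ψ₂ g'', hp⟩ w u ↔
      w.1.2 = (χ₂, ψ₂) ∧ g'' ∈ u.1.1 := Iff.rfl

lemma sigma_one {ψ φ : Formula} (h : Formula.khm ψ Formula.falsum φ ∈ Γ) :
    CanAct.one ψ φ ∈ SigmaGamma Γ := Or.inl ⟨ψ, φ, rfl, h⟩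

lemma sigma_two {ψ χ φ : Formula} (h1 : Formula.khm ψ χ φ ∈ Γ)
    (h2 : neg (Formula.khm ψ Formula.falsum φ) ∈ Γ) :
    CanAct.two χ ψ φ ∈ SigmaGamma Γ := Or.inr ⟨χ, ψ, φ, rfl, h1, h2⟩

lemma top_mem {Δ : Set Formula} (hΔ : MCS Δ) : Formula.top ∈ Δ :=
  hΔ.mem_of_deriv deriv_top

/-- The default state `(Δ, ⊤^⊥)` for `Δ ∈ Φ_Γ`. -/
def mkB (hΓ : MCS Γ) {Δ : Set Formula} (hΔ : Δ ∈ PhiGamma Γ) : (canonicalModel Γ).S :=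
  ⟨(Δ, (Formula.top, Formula.falsum)), hΔ, top_mem (phi_mcs hΔ),
    Or.inr (sigma_one (khm_falsum_any hΓ Formula.top))⟩

/-- States with marker `(g', ψ')` exist for all `Δ ∈ Φ_Γ` containing `g'`,
provided `⟨ψ',⊥,g'⟩ ∈ Σ_Γ`. -/
def mkA {Δ : Set Formula} (hΔ : Δ ∈ PhiGamma Γ) {ψ' g' : Formula} (hg' : g' ∈ Δ)
    (hSig : CanAct.one ψ' g' ∈ SigmaGamma Γ) : (canonicalModel Γ).S :=
  ⟨(Δ, (g', ψ')), hΔ, hg', Or.inr hSig⟩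

/-! ### The goodness predicate and the key extraction lemma -/

/-- The body of the `Khm` satisfaction clause at a single state, with the
postconditions expressed as membership. -/
def GoodAt (Γ : Set Formula) (χf φf : Formula) (σ : List (ActG Γ))
    (w : (canonicalModel Γ).S) : Prop :=
  (canonicalModel Γ).stronglyExec σ w ∧
  (∀ k, 0 < k → k < σ.length → ∀ t, (canonicalModel Γ).bigStep (σ.take k) w t →
    χf ∈ t.1.1) ∧
  (∀ t, (canonicalModel Γ).bigStep σ w t → φf ∈ t.1.1)

def GoodOn (Γ : Set Formula) (χf φf : Formula) (σ : List (ActG Γ))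
    (T : Set (canonicalModel Γ).S) : Prop :=
  ∀ w ∈ T, GoodAt Γ χf φf σ w

def SetB (Γ : Set Formula) (g : Formula) : Set (canonicalModel Γ).S := {w | g ∈ w.1.1}

def SetA (Γ : Set Formula) (g ψ : Formula) : Set (canonicalModel Γ).S :=
  {w | w.1.2 = (g, ψ)}

lemma good_tail {χf φf : Formula} {a : ActG Γ} {σ : List (ActG Γ)}
    {w : (canonicalModel Γ).S} (h : GoodAt Γ χf φf (a :: σ) w) :
    ∀ u, (canonicalModel Γ).R a w u → GoodAt Γ χf φf σ u := by
  obtain ⟨hse, hint, hpost⟩ := h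
  intro u hu
  refine ⟨(Model.stronglyExec_cons.1 hse).2 u hu, ?_, ?_⟩
  · intro k hk hk2 t ht
    exact hint (k + 1) (Nat.succ_pos _) (by simpa using Nat.succ_lt_succ hk2) t
      ⟨u, hu, ht⟩
  · intro t ht
    exact hpost t ⟨u, hu, ht⟩

lemma good_transfer {χf φf : Formula} {b : ActG Γ} {σ' : List (ActG Γ)}
    {w w' : (canonicalModel Γ).S}
    (hsucc : ∀ u, (canonicalModel Γ).R b w' u ↔ (canonicalModel Γ).R b w u)
    (h : GoodAt Γ χf φf (b :: σ') w) : GoodAt Γ χf φf (b :: σ') w' := by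
  obtain ⟨hse, hint, hpost⟩ := h
  rw [Model.stronglyExec_cons] at hse
  refine ⟨?_, ?_, ?_⟩
  · rw [Model.stronglyExec_cons]
    obtain ⟨⟨u₀, hu₀⟩, hrest⟩ := hse
    exact ⟨⟨u₀, (hsucc u₀).2 hu₀⟩, fun u hu => hrest u ((hsucc u).1 hu)⟩
  · intro k hk hk2 t ht
    cases k with
    | zero => exact absurd hk (by simp)
    | succ k =>
        obtain ⟨u, hu, ht'⟩ := ht
        exact hint (k + 1) (Nat.succ_pos _) hk2 t ⟨u, (hsucc u).1 hu, ht'⟩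
  · intro t ht
    obtain ⟨u, hu, ht'⟩ := ht
    exact hpost t ⟨u, (hsucc u).1 hu, ht'⟩

lemma lemB_nil (hΓ : MCS Γ) (χf φf g : Formula)
    (h : GoodOn Γ χf φf [] (SetB Γ g)) : Formula.khm g χf φf ∈ Γ := by
  have hU : U (g.imp φf) ∈ Γ := by
    apply U_imp_of_all hΓ
    intro Δ hΔ hg
    exact (h (mkB hΓ hΔ) hg).2.2 (mkB hΓ hΔ) rfl
  exact khm_mono_mem' hΓ (khm_emp_mem hΓ hU) (Deriv.imp_self g)
    (deriv_falsum_imp χf) (Deriv.imp_self φf)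

/-- The key extraction lemma: a uniform strategy from all `g`-states yields
`Khm(g, χf, φf) ∈ Γ`. -/
lemma lemB (hΓ : MCS Γ) (χf φf : Formula) :
    ∀ n (σ : List (ActG Γ)), σ.length ≤ n → ∀ g : Formula,
      (∃ Δ ∈ PhiGamma Γ, g ∈ Δ) → GoodOn Γ χf φf σ (SetB Γ g) →
      Formula.khm g χf φf ∈ Γ := by
  intro n
  induction n with
  | zero =>
      intro σ hlen g _ hG
      cases σ with
      | nil => exact lemB_nil hΓ χf φf g hG
      | cons a σ' => simp at hlen
  | succ n ih =>
      intro σ hlen g hg hG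
      cases σ with
      | nil => exact lemB_nil hΓ χf φf g hG
      | cons a σ'' =>
        obtain ⟨Δg, hΔg, hgΔ⟩ := hg
        have hw₀ : (mkB hΓ hΔg) ∈ SetB Γ g := hgΔ
        obtain ⟨av, hav⟩ := a
        -- the first action must be of type `one`
        obtain ⟨ψ', g', rfl⟩ : ∃ ψ' g', av = CanAct.one ψ' g' := by
          rcases hav with ⟨ψ, φ, he, hm⟩ | ⟨χ₀, ψ₀, φ₀, he, hm1, hm2⟩
          · exact ⟨ψ, φ, he⟩
          · exfalso
            subst he
            have hse := (hG _ hw₀).1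
            obtain ⟨u, hu⟩ := (Model.stronglyExec_cons.1 hse).1
            have hmk : (Formula.top, Formula.falsum) = (χ₀, ψ₀) := (R_two.1 hu).1
            injection hmk with h1 h2
            subst h1; subst h2
            exact hΓ.not_both (khm_falsum_any hΓ φ₀) hm2
        have hSa : Formula.khm ψ' Formula.falsum g' ∈ Γ := by
          rcases hav with ⟨ψ, φ, he, hm⟩ | ⟨χ₀, ψ₀, φ₀, he, _, _⟩
          · injection he with h1 h2; subst h1; subst h2; exact hm
          · cases he
        have hψall : ∀ w ∈ SetB Γ g, ψ' ∈ w.1.1 := by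
          intro w hw
          obtain ⟨u, hu⟩ := (Model.stronglyExec_cons.1 (hG w hw).1).1
          exact (R_one.1 hu).1
        have hU1 : U (g.imp ψ') ∈ Γ :=
          U_imp_of_all hΓ (fun Δ hΔ hgm => hψall (mkB hΓ hΔ) hgm)
        have hKhmG : Formula.khm g Formula.falsum g' ∈ Γ :=
          khm_mono_mem hΓ hSa hU1
            (hΓ.mem_of_deriv (Deriv.imp_self Formula.falsum).necU)
            (hΓ.mem_of_deriv (Deriv.imp_self g').necU)
        have hSa2 : CanAct.one ψ' g' ∈ SigmaGamma Γ := hav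
        have hsucc : ∀ w ∈ SetB Γ g, ∀ u : (canonicalModel Γ).S,
            (canonicalModel Γ).R ⟨CanAct.one ψ' g', hav⟩ w u ↔ u ∈ SetA Γ g' ψ' := by
          intro w hw u
          rw [R_one]
          exact ⟨fun h => h.2, fun h => ⟨hψall w hw, h⟩⟩
        have hGA : GoodOn Γ χf φf σ'' (SetA Γ g' ψ') := by
          intro u hu
          exact good_tail (hG _ hw₀) u ((hsucc _ hw₀ u).2 hu)
        have hA_mem : ∀ u ∈ SetA Γ g' ψ', g' ∈ u.1.1 := by
          intro u hu
          have h' := state_marker_mem u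
          rw [hu] at h'
          exact h'
        have hΔ'ex : ∃ Δ ∈ PhiGamma Γ, g' ∈ Δ := by
          obtain ⟨u, hu⟩ := (Model.stronglyExec_cons.1 (hG _ hw₀).1).1
          have huA : u ∈ SetA Γ g' ψ' := (hsucc _ hw₀ u).1 hu
          exact ⟨u.1.1, state_phi u, hA_mem u huA⟩
        have hInterm1 : σ'' ≠ [] → U (g'.imp χf) ∈ Γ := by
          intro hne
          apply U_imp_of_all hΓ
          intro Δ hΔ hg'
          have hR : (canonicalModel Γ).R ⟨CanAct.one ψ' g', hav⟩ (mkB hΓ hΔg)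
              (mkA hΔ hg' hSa2) := (hsucc _ hw₀ _).2 rfl
          exact (hG _ hw₀).2.1 1 one_pos
            (by simp only [List.length_cons]
                exact Nat.succ_lt_succ (List.length_pos_iff.2 hne))
            (mkA hΔ hg' hSa2) ⟨mkA hΔ hg' hSa2, hR, rfl⟩
        cases σ'' with
        | nil =>
            have hU2 : U (g'.imp φf) ∈ Γ := by
              apply U_imp_of_all hΓ
              intro Δ hΔ hg'
              exact (hG _ hw₀).2.2 (mkA hΔ hg' hSa2)
                ⟨mkA hΔ hg' hSa2, (hsucc _ hw₀ _).2 rfl, rfl⟩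
            exact khm_mono_mem hΓ hKhmG
              (hΓ.mem_of_deriv (Deriv.imp_self g).necU)
              (hΓ.mem_of_deriv (deriv_falsum_imp χf).necU) hU2
        | cons b σ''' =>
            obtain ⟨Δ', hΔ'Φ, hg'Δ'⟩ := hΔ'ex
            have huΔ'A : mkA hΔ'Φ hg'Δ' hSa2 ∈ SetA Γ g' ψ' := rfl
            have hIχ : U (g'.imp χf) ∈ Γ := hInterm1 (by simp)
            obtain ⟨bv, hbv⟩ := b
            have hbv2 := hbv
            rcases hbv2 with ⟨ψ₂, g'', hb, hSb⟩ | ⟨χ₂, ψ₂, g'', hb, hb1, hb2⟩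
            · -- second action of type `one`
              subst hb
              have hGB : GoodOn Γ χf φf (⟨CanAct.one ψ₂ g'', hbv⟩ :: σ''') (SetB Γ g') := by
                intro w' hw'
                exact good_transfer (w := mkA (state_phi w') hw' hSa2) (w' := w')
                  (fun u => Iff.rfl) (hGA (mkA (state_phi w') hw' hSa2) rfl)
              have hrec : Formula.khm g' χf φf ∈ Γ :=
                ih _ (by simp only [List.length_cons] at hlen ⊢; omega) g'
                  ⟨Δ', hΔ'Φ, hg'Δ'⟩ hGB
              have hKhmGχ : Formula.khm g χf g' ∈ Γ :=
                khm_mono_mem hΓ hKhmG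
                  (hΓ.mem_of_deriv (Deriv.imp_self g).necU)
                  (hΓ.mem_of_deriv (deriv_falsum_imp χf).necU)
                  (hΓ.mem_of_deriv (Deriv.imp_self g').necU)
              exact comp_mem hΓ hKhmGχ hrec hIχ
            · -- second action of type `two`
              subst hb
              obtain ⟨u1, hu1⟩ :=
                (Model.stronglyExec_cons.1 (hGA _ huΔ'A).1).1
              have hmk : (g', ψ') = (χ₂, ψ₂) := (R_two.1 hu1).1
              injection hmk with h1 h2
              subst h1; subst h2
              have hsucc2 : ∀ u ∈ SetA Γ g' ψ', ∀ t : (canonicalModel Γ).S,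
                  (canonicalModel Γ).R ⟨CanAct.two g' ψ' g'', hbv⟩ u t ↔
                    t ∈ SetB Γ g'' := by
                intro u hu t
                rw [R_two]
                exact ⟨fun h => h.2, fun h => ⟨hu, h⟩⟩
              have hGB'' : GoodOn Γ χf φf σ''' (SetB Γ g'') := by
                intro t ht
                exact good_tail (hGA _ huΔ'A) t ((hsucc2 _ huΔ'A t).2 ht)
              have hg''ex : ∃ Δ ∈ PhiGamma Γ, g'' ∈ Δ :=
                ⟨u1.1.1, state_phi u1, (R_two.1 hu1).2⟩
              have hKhm2 : Formula.khm g χf g'' ∈ Γ :=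
                khm_mono_mem hΓ hb1 hU1 hIχ
                  (hΓ.mem_of_deriv (Deriv.imp_self g'').necU)
              cases σ''' with
              | nil =>
                  have hU3 : U (g''.imp φf) ∈ Γ := by
                    apply U_imp_of_all hΓ
                    intro Δ hΔ hg''
                    exact (hGA _ huΔ'A).2.2 (mkB hΓ hΔ)
                      ⟨mkB hΓ hΔ, (hsucc2 _ huΔ'A _).2 hg'', rfl⟩
                  exact khm_mono_mem hΓ hKhm2
                    (hΓ.mem_of_deriv (Deriv.imp_self g).necU)
                    (hΓ.mem_of_deriv (Deriv.imp_self χf).necU) hU3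
              | cons c σ4 =>
                  have hIχ2 : U (g''.imp χf) ∈ Γ := by
                    apply U_imp_of_all hΓ
                    intro Δ hΔ hg''
                    have hRa : (canonicalModel Γ).R ⟨CanAct.one ψ' g', hav⟩
                        (mkB hΓ hΔg) (mkA hΔ'Φ hg'Δ' hSa2) := (hsucc _ hw₀ _).2 rfl
                    have hRb : (canonicalModel Γ).R ⟨CanAct.two g' ψ' g'', hbv⟩
                        (mkA hΔ'Φ hg'Δ' hSa2) (mkB hΓ hΔ) :=
                      (hsucc2 _ huΔ'A _).2 hg''
                    exact (hG _ hw₀).2.1 2 (by omega)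
                      (by simp only [List.length_cons]; omega) (mkB hΓ hΔ)
                      ⟨mkA hΔ'Φ hg'Δ' hSa2, hRa, mkB hΓ hΔ, hRb, rfl⟩
                  have hrec : Formula.khm g'' χf φf ∈ Γ :=
                    ih (c :: σ4) (by simp only [List.length_cons] at hlen ⊢; omega)
                      g'' hg''ex hGB''
                  exact comp_mem hΓ hKhm2 hrec hIχ2

end Canonical

/-! ### The truth lemma -/

lemma stronglyExec_nil {Act : Type} {M : Model Act} (w : M.S) :
    M.stronglyExec [] w := by
  intro k hk
  exact absurd hk (by simp)

theorem truth_lemma {Γ : Set Formula} (hΓ : MCS Γ) :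
    ∀ (θ : Formula) (w : (canonicalModel Γ).S),
      (canonicalModel Γ).sat θ w ↔ θ ∈ w.1.1 := by
  intro θ
  induction θ with
  | atom n => intro w; exact Iff.rfl
  | neg φ ih =>
      intro w
      show ¬ (canonicalModel Γ).sat φ w ↔ _
      rw [ih w]
      exact ((state_mcs w).neg_mem_iff).symm
  | and φ ψ ihφ ihψ =>
      intro w
      show ((canonicalModel Γ).sat φ w ∧ (canonicalModel Γ).sat ψ w) ↔ _
      rw [ihφ w, ihψ w]
      exact ((state_mcs w).and_mem_iff).symm
  | khm ψ χ φ ihψ ihχ ihφ =>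
      intro w
      constructor
      · rintro ⟨σ, hσ⟩
        have hG : GoodOn Γ χ φ σ (SetB Γ ψ) := by
          intro w' hw'
          have h := hσ w' ((ihψ w').2 hw')
          exact ⟨h.1.1, fun k hk hk2 t ht => (ihχ t).1 (h.1.2 k hk hk2 t ht),
                 fun t ht => (ihφ t).1 (h.2 t ht)⟩
        by_cases hex : ∃ Δ ∈ PhiGamma Γ, ψ ∈ Δ
        · exact (khm_mem_iff_phi hΓ (state_phi w)).2
            (lemB hΓ χ φ σ.length σ le_rfl ψ hex hG)
        · push_neg at hex
          have hU : U (ψ.imp φ) ∈ Γ :=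
            U_imp_of_all hΓ (fun Δ hΔ hm => absurd hm (hex Δ hΔ))
          exact (khm_mem_iff_phi hΓ (state_phi w)).2
            (khm_mono_mem' hΓ (khm_emp_mem hΓ hU) (Deriv.imp_self ψ)
              (deriv_falsum_imp χ) (Deriv.imp_self φ))
      · intro hmem
        have hΓmem : Formula.khm ψ χ φ ∈ Γ :=
          (khm_mem_iff_phi hΓ (state_phi w)).1 hmem
        by_cases hex : ∃ s' : (canonicalModel Γ).S, (canonicalModel Γ).sat ψ s'
        · obtain ⟨s₀, hs₀⟩ := hex
          have hψex : ∃ Δ ∈ PhiGamma Γ, ψ ∈ Δ :=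
            ⟨s₀.1.1, state_phi s₀, (ihψ s₀).1 hs₀⟩
          by_cases hbot : Formula.khm ψ Formula.falsum φ ∈ Γ
          · -- one-step strategy
            obtain ⟨Δ₂, hΔ₂, hφΔ₂⟩ := exists_phi_of_khm hΓ hbot hψex
            refine ⟨[⟨CanAct.one ψ φ, sigma_one hbot⟩], ?_⟩
            intro s' hs'
            have hψs' : ψ ∈ s'.1.1 := (ihψ s').1 hs'
            have hRmk : (canonicalModel Γ).R ⟨CanAct.one ψ φ, sigma_one hbot⟩ s'
                (mkA hΔ₂ hφΔ₂ (sigma_one hbot)) := R_one.2 ⟨hψs', rfl⟩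
            refine ⟨⟨?_, ?_⟩, ?_⟩
            · rw [Model.stronglyExec_cons]
              exact ⟨⟨_, hRmk⟩, fun u _ => stronglyExec_nil u⟩
            · intro k hk hk2
              exact absurd hk2 (by simp; omega)
            · intro t ht
              obtain ⟨u, hu, htu⟩ := ht
              cases htu
              have hmk : t.1.2 = (φ, ψ) := (R_one.1 hu).2
              have hm := state_marker_mem t
              rw [hmk] at hm
              exact (ihφ t).2 hm
          · -- two-step strategy
            have hnbot : neg (Formula.khm ψ Formula.falsum φ) ∈ Γ :=
              hΓ.neg_mem_iff.2 hbot
            have hχkh : Formula.khm ψ Formula.falsum χ ∈ Γ :=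
              hΓ.mp_mem (hΓ.mem_of_deriv (Deriv.oneKhm ψ χ φ))
                (hΓ.and_mem_iff.2 ⟨hΓmem, hnbot⟩)
            obtain ⟨Δ₁, hΔ₁, hχΔ₁⟩ := exists_phi_of_khm hΓ hχkh hψex
            obtain ⟨Δ₂, hΔ₂, hφΔ₂⟩ := exists_phi_of_khm hΓ hΓmem hψex
            refine ⟨[⟨CanAct.one ψ χ, sigma_one hχkh⟩,
                     ⟨CanAct.two χ ψ φ, sigma_two hΓmem hnbot⟩], ?_⟩
            intro s' hs'
            have hψs' : ψ ∈ s'.1.1 := (ihψ s').1 hs'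
            have hRa : (canonicalModel Γ).R ⟨CanAct.one ψ χ, sigma_one hχkh⟩ s'
                (mkA hΔ₁ hχΔ₁ (sigma_one hχkh)) := R_one.2 ⟨hψs', rfl⟩
            have hu₂ : ((Δ₂, (φ, Formula.falsum)) : Set Formula × Formula × Formula)
                ∈ CanStates Γ :=
              ⟨hΔ₂, hφΔ₂, Or.inr (sigma_one (khm_falsum_any hΓ φ))⟩
            refine ⟨⟨?_, ?_⟩, ?_⟩
            · rw [Model.stronglyExec_cons]
              refine ⟨⟨_, hRa⟩, ?_⟩
              intro u hu
              rw [Model.stronglyExec_cons]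
              refine ⟨⟨⟨_, hu₂⟩, R_two.2 ⟨(R_one.1 hu).2, hφΔ₂⟩⟩,
                fun u' _ => stronglyExec_nil u'⟩
            · intro k hk hk2 t ht
              have hk1 : k = 1 := by simp at hk2; omega
              subst hk1
              obtain ⟨u, hu, htu⟩ := ht
              cases htu
              have hmk : t.1.2 = (χ, ψ) := (R_one.1 hu).2
              have hm := state_marker_mem t
              rw [hmk] at hm
              exact (ihχ t).2 hm
            · intro t ht
              obtain ⟨u, hu, u', hu', htu⟩ := ht
              cases htu
              exact (ihφ t).2 (R_two.1 hu').2
        · exact ⟨[], fun s' hs' => absurd ⟨s', hs'⟩ hex⟩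

/-- SKHM is strongly complete: every SKHM-consistent set of
formulas is satisfiable at some state of some model; in particular every valid
formula is derivable in SKHM. -/
theorem skhm_strong_completeness :
    (∀ Γ : Set Formula, ConsistentSet Γ →
      ∃ (Act : Type) (_ : Countable Act) (_ : Nonempty Act) (M : Model Act)
        (_ : Nonempty M.S) (s : M.S), ∀ φ ∈ Γ, M.sat φ s) ∧
    (∀ φ : Formula,
      (∀ (Act : Type), Countable Act → Nonempty Act → Valid Act φ) →
      Deriv φ) := by
  have main : ∀ Γ : Set Formula, ConsistentSet Γ →
      ∃ (Δ : Set Formula) (hΔ : MCS Δ) (s : (canonicalModel Δ).S),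
        Nonempty (ActG Δ) ∧ ∀ φ ∈ Γ, (canonicalModel Δ).sat φ s := by
    intro Γ hcons
    obtain ⟨Δ, hsub, hΔ⟩ := lindenbaum hcons
    refine ⟨Δ, hΔ, mkB hΔ (phi_self hΔ),
      ⟨⟨CanAct.one Formula.falsum Formula.top,
        sigma_one (khm_falsum_any hΔ Formula.top)⟩⟩, ?_⟩
    intro φ hφ
    exact (truth_lemma hΔ φ _).2 (hsub hφ)
  constructor
  · intro Γ hcons
    obtain ⟨Δ, hΔ, s, hne, hsat⟩ := main Γ hcons
    exact ⟨ActG Δ, inferInstance, hne, canonicalModel Δ, ⟨s⟩, s, hsat⟩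
  · intro φ hvalid
    by_contra hnd
    have hcons : ConsistentSet {neg φ} := by
      intro L hL hd
      apply hnd
      refine (Deriv.taut_imp (A := neg (conjList L)) (B := φ) ?_).mp hd
      intro v hv
      by_contra hφv
      have hφf : evalB v φ = false := by
        cases h : evalB v φ
        · rfl
        · exact absurd h hφv
      have hall : evalB v (conjList L) = true := by
        rw [evalB_conjList]
        intro ψ hψ
        have hmem := hL ψ hψ
        rw [Set.mem_singleton_iff] at hmem
        subst hmem
        rw [evalB_neg, hφf]
        rfl
      rw [evalB_neg, hall] at hv
      exact absurd hv (by simp)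
    obtain ⟨Δ, hΔ, s, hne, hsat⟩ := main {neg φ} hcons
    have hnegsat : (canonicalModel Δ).sat (neg φ) s := hsat _ rfl
    have hval : (canonicalModel Δ).sat φ s :=
      hvalid (ActG Δ) inferInstance hne (canonicalModel Δ) ⟨s⟩ s
    exact hnegsat hval
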